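/- Let Q be a k-generalized path Kronecker quiver with k ≥ 2: Q has two distinguished vertices i and j, and Q is the union of m nontrivial cycle-free paths from i to j and m' nontrivial cycle-free paths from j to i with m + m' = k, where these paths are pairwise arrow-disjoint, their internal vertices are pairwise distinct and different from i and j, and Q has no vertices or arrows other than those occurring on these paths. Then for every n ≥ 1 there exists a point W ∈ F•Rep(Q,β), β = (n, …, n), whose stabilizer in 𝕌 is trivial: if (u_v)_{v∈Q₀} ∈ 𝕌 satisfies u_{h(a)} · W(a) · u_{t(a)}⁻¹ = W(a) for every arrow a ∈ Q₁, then u_v = Iₙ for every vertex v. -/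

import Mathlib

/-- `UT n X` : `X` is an `n × n` upper triangular complex matrix (an element of 𝔟). -/
def UT (n : ℕ) (X : Matrix (Fin n) (Fin n) ℂ) : Prop :=
  ∀ i j : Fin n, (j : ℕ) < (i : ℕ) → X i j = 0

/-- `Unip n u` : `u` is a unipotent upper triangular matrix (an element of `U`). -/
def Unip (n : ℕ) (u : Matrix (Fin n) (Fin n) ℂ) : Prop :=
  UT n u ∧ ∀ i : Fin n, u i i = 1

/-- A finite quiver: finite vertex set `Q0`, finite arrow set `Q1`, head and tail maps. -/
structure FinQuiver where
  Q0 : Type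
  Q1 : Type
  [fin0 : Fintype Q0]
  [fin1 : Fintype Q1]
  [dec0 : DecidableEq Q0]
  h : Q1 → Q0
  t : Q1 → Q0

attribute [instance] FinQuiver.fin0 FinQuiver.fin1 FinQuiver.dec0

/-- Nontrivial cycle-free path from `v` to `w`: a nonempty list of composable arrows
starting at `v`, ending at `w`, and visiting no vertex twice. -/
def FinQuiver.IsCFPath (Q : FinQuiver) (L : List Q.Q1) (v w : Q.Q0) : Prop :=
  ∃ hne : L ≠ [],
    L.Chain' (fun a b => Q.h a = Q.t b) ∧
    Q.t (L.head hne) = v ∧ Q.h (L.getLast hne) = w ∧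
    (v :: L.map Q.h).Nodup

/-- The internal vertices of a path `L` from `v` to `w`: the heads of all arrows of `L`
except the last one. -/
def FinQuiver.internalVerts (Q : FinQuiver) (L : List Q.Q1) : List Q.Q0 :=
  (L.map Q.h).dropLast

open Matrix in
lemma unip_det_isUnit {n : ℕ} {u : Matrix (Fin n) (Fin n) ℂ} (hu : Unip n u) :
    IsUnit u.det := by
  have hbt : u.BlockTriangular id := by
    intro a b hab
    exact hu.1 a b (by exact_mod_cast hab)
  rw [Matrix.det_of_upperTriangular hbt]
  simp [hu.2]

lemma eq_one_of_comm_diag {n : ℕ} {u : Matrix (Fin n) (Fin n) ℂ} {d : Fin n → ℂ}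
    (hd : Function.Injective d) (hdiag : ∀ p, u p p = 1)
    (h : u * Matrix.diagonal d = Matrix.diagonal d * u) : u = 1 := by
  apply Matrix.ext_iff.1
  intro p q
  by_cases hpq : p = q
  · subst hpq; simp [hdiag p]
  · have h1 := Matrix.ext_iff.2 h p q
    rw [Matrix.mul_diagonal, Matrix.diagonal_mul] at h1
    have hne : d q - d p ≠ 0 := sub_ne_zero.2 fun hh => hpq (hd hh).symm
    have h2 : u p q * (d q - d p) = 0 := by linear_combination h1
    have h3 : u p q = 0 := by
      rcases mul_eq_zero.1 h2 with h | h
      · exact h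
      · exact absurd h hne
    rw [h3, Matrix.one_apply_ne hpq]

lemma chain_prop (Q : FinQuiver) {α : Type} (u : Q.Q0 → α) (a₀ : Q.Q1)
    (hstep : ∀ a : Q.Q1, a ≠ a₀ → u (Q.h a) = u (Q.t a)) :
    ∀ (L : List Q.Q1) (v : Q.Q0), L.Chain' (fun a b => Q.h a = Q.t b) →
      (∀ hne : L ≠ [], Q.t (L.head hne) = v) →
      (∀ a ∈ L.dropLast, a ≠ a₀) →
      ∀ a ∈ L, u (Q.t a) = u v ∧ (a ≠ a₀ → u (Q.h a) = u v) := by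
  intro L
  induction L with
  | nil => intro v _ _ _ a ha; simp at ha
  | cons b L' ih =>
    intro v hchain hhead hdrop a ha
    have htb : Q.t b = v := hhead (by simp)
    rcases List.mem_cons.1 ha with rfl | ha'
    · exact ⟨by rw [htb], fun hne => by rw [hstep a hne, htb]⟩
    · match L', hchain, ha' with
      | c :: L'', hchain, ha' =>
        have hbc : Q.h b = Q.t c := (List.isChain_cons_cons.1 hchain).1
        have hb0 : b ≠ a₀ := hdrop b (by simp)
        have hrec := ih (Q.h b) (List.isChain_cons_cons.1 hchain).2
          (fun hne => hbc.symm)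
          (fun x hx => hdrop x (by
            rw [List.dropLast_cons₂]
            exact List.mem_cons_of_mem _ hx))
          a ha'
        have hub : u (Q.h b) = u v := by rw [hstep b hb0, htb]
        exact ⟨hrec.1.trans hub, fun h0 => (hrec.2 h0).trans hub⟩

lemma master (Q : FinQuiver) (i j : Q.Q0) (n : ℕ)
    (PL : List (List Q.Q1 × Q.Q0 × Q.Q0))
    (hpaths : ∀ p ∈ PL, Q.IsCFPath p.1 p.2.1 p.2.2 ∧
      ((p.2.1 = i ∧ p.2.2 = j) ∨ (p.2.1 = j ∧ p.2.2 = i)))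
    (hnodup : (PL.map Prod.fst).flatten.Nodup)
    (hvert : ∀ x : Q.Q0, x = i ∨ x = j ∨ ∃ p ∈ PL, x ∈ Q.internalVerts p.1)
    (hlen : 2 ≤ PL.length) :
    ∃ W : Q.Q1 → Matrix (Fin n) (Fin n) ℂ,
      (∀ a : Q.Q1, UT n (W a)) ∧
      ∀ u : Q.Q0 → Matrix (Fin n) (Fin n) ℂ,
        (∀ v : Q.Q0, Unip n (u v)) →
        (∀ a : Q.Q1, u (Q.h a) * W a * (u (Q.t a))⁻¹ = W a) →
        ∀ v : Q.Q0, u v = 1 := by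
  classical
  rcases PL with _ | ⟨p0, PL'⟩
  · simp at hlen
  rcases PL' with _ | ⟨p1, rest⟩
  · simp at hlen
  obtain ⟨hP0, hE0⟩ := hpaths p0 (by simp)
  obtain ⟨hP1, hE1⟩ := hpaths p1 (by simp)
  obtain ⟨hne0, hch0, hhd0, hlt0, -⟩ := hP0
  obtain ⟨hne1, hch1, hhd1, hlt1, -⟩ := hP1
  set a₀ := p1.1.getLast hne1 with ha₀def
  set d : Fin n → ℂ := fun p => ((p : ℕ) : ℂ) + 1 with hdd
  have hdinj : Function.Injective d := by
    intro p q hpq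
    have h1 : ((p : ℕ) : ℂ) + 1 = ((q : ℕ) : ℂ) + 1 := hpq
    have h2 : ((p : ℕ) : ℂ) = ((q : ℕ) : ℂ) := by
      exact add_right_cancel h1
    exact Fin.val_injective (by exact_mod_cast h2)
  refine ⟨fun a => if a = a₀ then Matrix.diagonal d else 1, ?_, ?_⟩
  · intro a p q hpq
    have hpq' : p ≠ q := fun h => by subst h; omega
    by_cases h : a = a₀ <;>
      simp [h, Matrix.diagonal_apply_ne _ hpq', Matrix.one_apply_ne hpq']
  · intro u hu hrel
    simp only [List.map_cons, List.flatten_cons] at hnodup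
    have hinv : ∀ v, (u v)⁻¹ * u v = 1 :=
      fun v => Matrix.nonsing_inv_mul _ (unip_det_isUnit (hu v))
    have hstep0 : ∀ a : Q.Q1, u (Q.h a) * (if a = a₀ then Matrix.diagonal d else 1) =
        (if a = a₀ then Matrix.diagonal d else 1) * u (Q.t a) := by
      intro a
      have h2 := congrArg (fun X => X * u (Q.t a)) (hrel a)
      simpa [mul_assoc, hinv (Q.t a)] using h2
    have hstep : ∀ a : Q.Q1, a ≠ a₀ → u (Q.h a) = u (Q.t a) := by
      intro a hne
      simpa [if_neg hne] using hstep0 a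
    have hd1 : List.Disjoint p0.1 (p1.1 ++ ((rest.map Prod.fst).flatten)) :=
      List.disjoint_of_nodup_append hnodup
    have hn2 : (p1.1 ++ ((rest.map Prod.fst).flatten)).Nodup := hnodup.of_append_right
    have hd2 : List.Disjoint p1.1 ((rest.map Prod.fst).flatten) :=
      List.disjoint_of_nodup_append hn2
    have hn1 : p1.1.Nodup := hn2.of_append_left
    have ha₀mem : a₀ ∈ p1.1 := List.getLast_mem hne1
    have ha₀p0 : a₀ ∉ p0.1 := fun h => hd1 h (List.mem_append_left _ ha₀mem)
    have ha₀drop1 : a₀ ∉ p1.1.dropLast := by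
      intro hmem
      have heq := List.dropLast_append_getLast hne1
      rw [← ha₀def] at heq
      rw [← heq] at hn1
      exact List.disjoint_of_nodup_append hn1 hmem (List.mem_singleton_self _)
    have hdropall : ∀ p ∈ (p0 :: p1 :: rest), a₀ ∉ p.1.dropLast := by
      intro p hp
      rcases List.mem_cons.1 hp with rfl | hp
      · exact fun h => ha₀p0 ((List.dropLast_sublist _).subset h)
      rcases List.mem_cons.1 hp with rfl | hp
      · exact ha₀drop1
      · intro h
        have hsub : p.1.Sublist ((rest.map Prod.fst).flatten) :=
          List.sublist_flatten_of_mem (List.mem_map_of_mem (f := Prod.fst) hp)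
        exact hd2 ha₀mem (hsub.subset ((List.dropLast_sublist _).subset h))
    have key : ∀ p ∈ (p0 :: p1 :: rest), ∀ a ∈ p.1,
        u (Q.t a) = u p.2.1 ∧ (a ≠ a₀ → u (Q.h a) = u p.2.1) := by
      intro p hp
      obtain ⟨⟨hne, hch, hhd, hlt, -⟩, -⟩ := hpaths p hp
      exact chain_prop Q u a₀ hstep p.1 p.2.1 hch (fun _ => hhd)
        (fun a ha heq => hdropall p hp (heq ▸ ha))
    have hgl0 : p0.1.getLast hne0 ∈ p0.1 := List.getLast_mem hne0
    have hgl0ne : p0.1.getLast hne0 ≠ a₀ := fun h => ha₀p0 (h ▸ hgl0)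
    have h01 : u p0.2.2 = u p0.2.1 := by
      have h := (key p0 (by simp) _ hgl0).2 hgl0ne
      rwa [hlt0] at h
    have huij : u i = u j := by
      rcases hE0 with ⟨h1, h2⟩ | ⟨h1, h2⟩ <;> rw [h1, h2] at h01
      · exact h01.symm
      · exact h01
    have hta₀ : u (Q.t a₀) = u p1.2.1 := (key p1 (by simp) a₀ ha₀mem).1
    have hvv : u p1.2.2 = u p1.2.1 := by
      rcases hE1 with ⟨h1, h2⟩ | ⟨h1, h2⟩ <;> rw [h1, h2]
      · exact huij.symm
      · exact huij
    have hcomm : u p1.2.1 * Matrix.diagonal d = Matrix.diagonal d * u p1.2.1 := by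
      have h := hstep0 a₀
      rw [if_pos rfl, hlt1, hta₀, hvv] at h
      exact h
    have hv1 : u p1.2.1 = 1 := eq_one_of_comm_diag hdinj (hu _).2 hcomm
    have hui : u i = 1 ∧ u j = 1 := by
      rcases hE1 with ⟨h1, -⟩ | ⟨h1, -⟩
      · rw [h1] at hv1
        exact ⟨hv1, by rw [← huij]; exact hv1⟩
      · rw [h1] at hv1
        exact ⟨by rw [huij]; exact hv1, hv1⟩
    intro v
    rcases hvert v with rfl | rfl | ⟨p, hp, hv⟩
    · exact hui.1
    · exact hui.2
    · rw [FinQuiver.internalVerts, ← List.map_dropLast] at hv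
      obtain ⟨a, ha, rfl⟩ := List.mem_map.1 hv
      have haL : a ∈ p.1 := (List.dropLast_sublist _).subset ha
      have hane : a ≠ a₀ := fun h => hdropall p hp (h ▸ ha)
      have hres := (key p hp a haL).2 hane
      rw [hres]
      obtain ⟨-, hE⟩ := hpaths p hp
      rcases hE with ⟨h1, -⟩ | ⟨h1, -⟩ <;> rw [h1]
      · exact hui.1
      · exact hui.2


/-- **Proposition 3.3.** Let `Q` be a `k`-generalized path Kronecker quiver with
`k = m + m' ≥ 2`: its two distinguished vertices are `i` and `j`, it is the union of `m`
nontrivial cycle-free paths `P r : i → j` and `m'` nontrivial cycle-free paths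
`P' r : j → i` which are pairwise arrow-disjoint, whose internal vertices are pairwise
distinct and different from `i` and `j`, and `Q` has no vertices or arrows besides those on
the paths. Then for every `n ≥ 1` there is a point `W` of the complete filtered
representation space `F•Rep(Q, (n,…,n))` whose stabilizer in `𝕌 = U^{Q₀}` is trivial. -/
theorem path_kronecker_point_with_trivial_stabilizer
    (Q : FinQuiver) (i j : Q.Q0) (hij : i ≠ j)
    (m m' k : ℕ) (hk : 2 ≤ k) (hmm : m + m' = k)
    (P : Fin m → List Q.Q1) (P' : Fin m' → List Q.Q1)
    (hP : ∀ r : Fin m, Q.IsCFPath (P r) i j)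
    (hP' : ∀ r : Fin m', Q.IsCFPath (P' r) j i)
    -- the paths are pairwise arrow-disjoint (and each arrow occurs once on its path):
    (harrNodup : ((List.ofFn P).flatten ++ (List.ofFn P').flatten).Nodup)
    -- `Q` has no arrows other than those occurring on the paths:
    (harrAll : ∀ a : Q.Q1, a ∈ (List.ofFn P).flatten ++ (List.ofFn P').flatten)
    -- the internal vertices of the paths are pairwise distinct:
    (hintNodup : ((List.ofFn fun r => Q.internalVerts (P r)).flatten ++
        (List.ofFn fun r => Q.internalVerts (P' r)).flatten).Nodup)
    -- the internal vertices are different from `i` and `j`: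
    (hinti : i ∉ (List.ofFn fun r => Q.internalVerts (P r)).flatten ++
        (List.ofFn fun r => Q.internalVerts (P' r)).flatten)
    (hintj : j ∉ (List.ofFn fun r => Q.internalVerts (P r)).flatten ++
        (List.ofFn fun r => Q.internalVerts (P' r)).flatten)
    -- `Q` has no vertices other than `i`, `j` and the internal vertices of the paths:
    (hvertAll : ∀ x : Q.Q0, x = i ∨ x = j ∨
        x ∈ (List.ofFn fun r => Q.internalVerts (P r)).flatten ++
          (List.ofFn fun r => Q.internalVerts (P' r)).flatten)
    (n : ℕ) (hn : 1 ≤ n) :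
    ∃ W : Q.Q1 → Matrix (Fin n) (Fin n) ℂ,
      (∀ a : Q.Q1, UT n (W a)) ∧
      ∀ u : Q.Q0 → Matrix (Fin n) (Fin n) ℂ,
        (∀ v : Q.Q0, Unip n (u v)) →
        (∀ a : Q.Q1, u (Q.h a) * W a * (u (Q.t a))⁻¹ = W a) →
        ∀ v : Q.Q0, u v = 1 := by
  classical
  refine master Q i j n
    ((List.ofFn fun r => (P r, i, j)) ++ (List.ofFn fun r => (P' r, j, i))) ?_ ?_ ?_ ?_
  · intro p hp
    rcases List.mem_append.1 hp with hp | hp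
    · rw [List.mem_ofFn] at hp
      obtain ⟨r, rfl⟩ := hp
      exact ⟨hP r, Or.inl ⟨rfl, rfl⟩⟩
    · rw [List.mem_ofFn] at hp
      obtain ⟨r, rfl⟩ := hp
      exact ⟨hP' r, Or.inr ⟨rfl, rfl⟩⟩
  · simpa [List.map_ofFn, Function.comp_def] using harrNodup
  · intro x
    rcases hvertAll x with h | h | h
    · exact Or.inl h
    · exact Or.inr (Or.inl h)
    · refine Or.inr (Or.inr ?_)
      rcases List.mem_append.1 h with h | h <;>
        obtain ⟨l, hl, hxl⟩ := List.mem_flatten.1 h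
      · rw [List.mem_ofFn] at hl
        obtain ⟨r, rfl⟩ := hl
        exact ⟨(P r, i, j), List.mem_append_left _ (by rw [List.mem_ofFn]; exact ⟨r, rfl⟩), hxl⟩
      · rw [List.mem_ofFn] at hl
        obtain ⟨r, rfl⟩ := hl
        exact ⟨(P' r, j, i), List.mem_append_right _ (by rw [List.mem_ofFn]; exact ⟨r, rfl⟩), hxl⟩
  · simp only [List.length_append, List.length_ofFn]
    omega
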